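/- Let ν > 0. The function W_B(y) = 2·Σ_{i<j} ln(y_i² - y_j²) + 2ν·Σ_i ln y_i - ‖y‖²/2 on the open chamber {y ∈ ℝ^N : y_1 > ... > y_N > 0} attains its maximum at r if and only if for all i: r_i/2 = Σ_{j≠i} (1/(r_i - r_j) + 1/(r_i + r_j)) + ν/r_i. -/

import Mathlib

open Finset

noncomputable def WB (N : ℕ) (ν : ℝ) (y : Fin N → ℝ) : ℝ :=
  2 * ∑ i, ∑ j ∈ Finset.univ.filter (fun j => i < j), Real.log (y i ^ 2 - y j ^ 2)
    + 2 * ν * ∑ i, Real.log (y i)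
    - (∑ i, (y i) ^ 2) / 2

def InChamberB (N : ℕ) (y : Fin N → ℝ) : Prop :=
  StrictAnti y ∧ ∀ i, 0 < y i

lemma sum_pairs (N : ℕ) (a : Fin N → ℝ) (c : Fin N → Fin N → ℝ)
    (hc : ∀ i j, i ≠ j → c i j = - c j i) :
    ∑ i, ∑ j ∈ Finset.univ.filter (fun j => i < j), (a i - a j) * c i j
      = ∑ i, a i * ∑ j ∈ Finset.univ.erase i, c i j := by
  have h1 : ∀ i : Fin N, a i * ∑ j ∈ Finset.univ.erase i, c i j
      = ∑ j, (if i < j then a i * c i j else 0) + ∑ j, (if j < i then a i * c i j else 0) := by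
    intro i
    rw [Finset.mul_sum, ← Finset.sum_add_distrib, ← Finset.filter_ne' Finset.univ i,
      Finset.sum_filter]
    apply Finset.sum_congr rfl
    intro j _
    rcases lt_trichotomy i j with h | h | h
    · simp [h, h.ne', not_lt.mpr h.le]
    · simp [h]
    · simp [h, h.ne, not_lt.mpr h.le]
  have h2 : ∑ i, ∑ j, (if j < i then a i * c i j else 0)
      = ∑ i, ∑ j, (if i < j then -(a j * c i j) else 0) := by
    rw [Finset.sum_comm]
    apply Finset.sum_congr rfl; intro i _
    apply Finset.sum_congr rfl; intro j _
    by_cases h : i < j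
    · rw [if_pos h, if_pos h, hc j i h.ne']
      ring
    · simp [h]
  calc ∑ i, ∑ j ∈ Finset.univ.filter (fun j => i < j), (a i - a j) * c i j
      = ∑ i, ∑ j, (if i < j then (a i - a j) * c i j else 0) := by
        refine Finset.sum_congr rfl fun i _ => ?_; rw [Finset.sum_filter]
    _ = ∑ i, (∑ j, (if i < j then a i * c i j else 0) + ∑ j, (if i < j then -(a j * c i j) else 0)) := by
        refine Finset.sum_congr rfl fun i _ => ?_
        rw [← Finset.sum_add_distrib]
        refine Finset.sum_congr rfl fun j _ => ?_
        by_cases h : i < j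
        · rw [if_pos h, if_pos h, if_pos h]; ring
        · simp [h]
    _ = ∑ i, a i * ∑ j ∈ Finset.univ.erase i, c i j := by
        rw [Finset.sum_add_distrib, ← h2]
        rw [← Finset.sum_add_distrib]
        exact (Finset.sum_congr rfl fun i _ => (h1 i).symm)

lemma sq_sub_pos {N : ℕ} {y : Fin N → ℝ} (hy : InChamberB N y) {i j : Fin N} (h : i < j) :
    0 < y i ^ 2 - y j ^ 2 := by
  have h1 : y j < y i := hy.1 h
  have h2 : 0 < y j := hy.2 j
  nlinarith

lemma eq_reform (N : ℕ) (ν : ℝ) (r : Fin N → ℝ) (hr : InChamberB N r) (i : Fin N) :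
    (r i / 2 = (∑ j ∈ Finset.univ.erase i, (1 / (r i - r j) + 1 / (r i + r j))) + ν / r i)
    ↔ 2 * (∑ j ∈ Finset.univ.erase i, 1 / (r i ^ 2 - r j ^ 2)) + ν / (r i ^ 2) = 1 / 2 := by
  have hri : 0 < r i := hr.2 i
  have hsum : ∑ j ∈ Finset.univ.erase i, (1 / (r i - r j) + 1 / (r i + r j))
      = 2 * r i * ∑ j ∈ Finset.univ.erase i, 1 / (r i ^ 2 - r j ^ 2) := by
    rw [Finset.mul_sum]
    refine Finset.sum_congr rfl fun j hj => ?_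
    have hij : j ≠ i := Finset.ne_of_mem_erase hj
    have h1 : r i - r j ≠ 0 := sub_ne_zero.mpr (hr.1.injective.ne (Ne.symm hij))
    have h2 : r i + r j ≠ 0 := by have := hr.2 j; positivity
    have h3 : r i ^ 2 - r j ^ 2 ≠ 0 := by
      intro h; apply h1; have : (r i - r j) * (r i + r j) = 0 := by ring_nf; linarith [h]
      rcases mul_eq_zero.mp this with h' | h'
      · exact h'
      · exact absurd h' h2
    field_simp
    ring
  rw [hsum]
  set S := ∑ j ∈ Finset.univ.erase i, 1 / (r i ^ 2 - r j ^ 2) with hS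
  constructor
  · intro h
    have hri' : r i ≠ 0 := ne_of_gt hri
    field_simp at h ⊢
    nlinarith [h]
  · intro h
    have hri' : r i ≠ 0 := ne_of_gt hri
    field_simp at h ⊢
    nlinarith [h]

lemma log_le_aux {A B : ℝ} (hA : 0 < A) (hB : 0 < B) :
    Real.log A ≤ Real.log B + (A - B) * (1 / B) := by
  have h := Real.log_le_sub_one_of_pos (div_pos hA hB)
  rw [Real.log_div (ne_of_gt hA) (ne_of_gt hB)] at h
  have : A / B - 1 = (A - B) * (1 / B) := by field_simp
  linarith [this ▸ h]

lemma backward (N : ℕ) (ν : ℝ) (hν : 0 < ν) (r : Fin N → ℝ) (hr : InChamberB N r)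
    (heq : ∀ i, 2 * (∑ j ∈ Finset.univ.erase i, 1 / (r i ^ 2 - r j ^ 2)) + ν / (r i ^ 2) = 1 / 2)
    (y : Fin N → ℝ) (hy : InChamberB N y) : WB N ν y ≤ WB N ν r := by
  set a : Fin N → ℝ := fun i => y i ^ 2 - r i ^ 2 with ha
  set c : Fin N → Fin N → ℝ := fun i j => 1 / (r i ^ 2 - r j ^ 2) with hcdef
  have hc : ∀ i j, i ≠ j → c i j = - c j i := by
    intro i j _
    simp only [hcdef]
    rw [← one_div_neg_eq_neg_one_div]
    ring_nf
  have hP := sum_pairs N a c hc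
  -- termwise bounds
  have S1 : ∑ i, ∑ j ∈ Finset.univ.filter (fun j => i < j), Real.log (y i ^ 2 - y j ^ 2)
      ≤ ∑ i, ∑ j ∈ Finset.univ.filter (fun j => i < j),
          (Real.log (r i ^ 2 - r j ^ 2) + (a i - a j) * c i j) := by
    refine Finset.sum_le_sum fun i _ => Finset.sum_le_sum fun j hj => ?_
    have hij : i < j := (Finset.mem_filter.mp hj).2
    have h1 := sq_sub_pos hy hij
    have h2 := sq_sub_pos hr hij
    have := log_le_aux h1 h2
    have harg : y i ^ 2 - y j ^ 2 - (r i ^ 2 - r j ^ 2) = a i - a j := by simp [ha]; ring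
    rw [harg] at this
    exact this
  have S2 : ∑ i, Real.log (y i) ≤ ∑ i, (Real.log (r i) + a i * (1 / (2 * r i ^ 2))) := by
    refine Finset.sum_le_sum fun i _ => ?_
    have hyi := hy.2 i
    have h1 : (0:ℝ) < y i ^ 2 := by positivity
    have h2 : (0:ℝ) < r i ^ 2 := by have := hr.2 i; positivity
    have h := log_le_aux h1 h2
    rw [Real.log_pow, Real.log_pow] at h
    have : a i * (1 / (2 * r i ^ 2)) = ((y i ^ 2 - r i ^ 2) * (1 / r i ^ 2)) / 2 := by
      simp only [ha]; ring
    rw [this]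
    push_cast at h
    linarith
  have S3 : ∑ i, (y i) ^ 2 = ∑ i, ((r i) ^ 2 + a i) := by
    refine Finset.sum_congr rfl fun i _ => by simp [ha]
  -- assemble
  have main : 2 * ∑ i, ∑ j ∈ Finset.univ.filter (fun j => i < j),
        (Real.log (r i ^ 2 - r j ^ 2) + (a i - a j) * c i j)
      + 2 * ν * ∑ i, (Real.log (r i) + a i * (1 / (2 * r i ^ 2)))
      - (∑ i, ((r i) ^ 2 + a i)) / 2
      ≤ WB N ν r := by
    unfold WB
    simp only [Finset.sum_add_distrib]
    have expand : ∑ i, ∑ j ∈ Finset.univ.filter (fun j => i < j), (a i - a j) * c i j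
        = ∑ i, a i * ∑ j ∈ Finset.univ.erase i, c i j := hP
    have final : 2 * (∑ i, a i * ∑ j ∈ Finset.univ.erase i, c i j)
        + 2 * ν * ∑ i, a i * (1 / (2 * r i ^ 2)) - (∑ i, a i) / 2 = 0 := by
      have : 2 * (∑ i, a i * ∑ j ∈ Finset.univ.erase i, c i j)
          + 2 * ν * ∑ i, a i * (1 / (2 * r i ^ 2)) - (∑ i, a i) / 2
          = ∑ i, a i * (2 * (∑ j ∈ Finset.univ.erase i, c i j) + ν / (r i ^ 2) - 1 / 2) := by
        rw [Finset.mul_sum, Finset.mul_sum, Finset.sum_div, ← Finset.sum_add_distrib,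
          ← Finset.sum_sub_distrib]
        refine Finset.sum_congr rfl fun i _ => ?_
        have : r i ≠ 0 := ne_of_gt (hr.2 i)
        field_simp
      rw [this]
      have z : ∀ i ∈ Finset.univ, a i * (2 * (∑ j ∈ Finset.univ.erase i, c i j) + ν / (r i ^ 2) - 1 / 2) = 0 := by
        intro i _
        rw [heq i]
        simp
      rw [Finset.sum_congr rfl z, Finset.sum_const_zero]
    rw [expand]
    linarith [final]
  have step : WB N ν y ≤ 2 * ∑ i, ∑ j ∈ Finset.univ.filter (fun j => i < j),
        (Real.log (r i ^ 2 - r j ^ 2) + (a i - a j) * c i j)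
      + 2 * ν * ∑ i, (Real.log (r i) + a i * (1 / (2 * r i ^ 2)))
      - (∑ i, ((r i) ^ 2 + a i)) / 2 := by
    unfold WB
    rw [S3]
    have h2ν : (0:ℝ) ≤ 2 * ν := by linarith
    have := mul_le_mul_of_nonneg_left S2 h2ν
    have := mul_le_mul_of_nonneg_left S1 (by norm_num : (0:ℝ) ≤ 2)
    linarith
  exact le_trans step main

lemma erase_split (N : ℕ) (i : Fin N) (g : Fin N → ℝ) :
    ∑ j ∈ Finset.univ.erase i, g j
      = ∑ j ∈ Finset.univ.filter (fun j => j < i), g j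
        + ∑ j ∈ Finset.univ.filter (fun j => i < j), g j := by
  rw [← Finset.filter_ne' Finset.univ i, Finset.sum_filter, Finset.sum_filter,
    Finset.sum_filter, ← Finset.sum_add_distrib]
  refine Finset.sum_congr rfl fun j _ => ?_
  rcases lt_trichotomy j i with h | h | h
  · simp [h, h.ne, not_lt.mpr h.le]
  · simp [h]
  · simp [h, h.ne', not_lt.mpr h.le]

lemma forward (N : ℕ) (ν : ℝ) (hν : 0 < ν) (r : Fin N → ℝ) (hr : InChamberB N r)
    (hmax : ∀ y : Fin N → ℝ, InChamberB N y → WB N ν y ≤ WB N ν r) (i : Fin N) :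
    2 * (∑ j ∈ Finset.univ.erase i, 1 / (r i ^ 2 - r j ^ 2)) + ν / (r i ^ 2) = 1 / 2 := by
  have hri : 0 < r i := hr.2 i
  set f : ℝ → ℝ := fun t => WB N ν (Function.update r i t) with hf
  -- eventually in chamber
  have hev : ∀ᶠ t in nhds (r i), InChamberB N (Function.update r i t) := by
    have h1 : ∀ᶠ t in nhds (r i), ∀ j ∈ Finset.univ.filter (fun j => j < i), t < r j := by
      rw [Filter.eventually_all_finset]
      intro j hj
      exact gt_mem_nhds (hr.1 (Finset.mem_filter.mp hj).2)
    have h2 : ∀ᶠ t in nhds (r i), ∀ j ∈ Finset.univ.filter (fun j => i < j), r j < t := by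
      rw [Filter.eventually_all_finset]
      intro j hj
      exact lt_mem_nhds (hr.1 (Finset.mem_filter.mp hj).2)
    have h3 : ∀ᶠ t in nhds (r i), 0 < t := lt_mem_nhds hri
    filter_upwards [h1, h2, h3] with t h1 h2 h3
    constructor
    · intro a b hab
      rcases eq_or_ne a i with ha | ha <;> rcases eq_or_ne b i with hb | hb
      · exact absurd (ha.trans hb.symm) (ne_of_lt hab)
      · rw [ha] at hab
        have := h2 b (Finset.mem_filter.mpr ⟨Finset.mem_univ _, hab⟩)
        simp [Function.update_apply, ha, hb, this]
      · rw [hb] at hab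
        have := h1 a (Finset.mem_filter.mpr ⟨Finset.mem_univ _, hab⟩)
        simp [Function.update_apply, ha, hb, this]
      · simp only [Function.update_apply, ha, hb, if_false]
        exact hr.1 hab
    · intro j
      rcases eq_or_ne j i with hj | hj
      · simp [Function.update_apply, hj, h3]
      · simp [Function.update_apply, hj, hr.2 j]
  -- local max
  have hlm : IsLocalMax f (r i) := by
    have : f (r i) = WB N ν r := by rw [hf]; simp [Function.update_eq_self]
    filter_upwards [hev] with t ht
    rw [this]
    exact hmax _ ht
  -- derivative
  set d : Fin N → Fin N → ℝ := fun p q =>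
    if p = i then (2 * r i) / (r i ^ 2 - r q ^ 2)
    else if q = i then (-(2 * r i)) / (r p ^ 2 - r i ^ 2) else 0 with hd
  have hderiv : HasDerivAt f
      (2 * (∑ p, ∑ q ∈ Finset.univ.filter (fun q => p < q), d p q) + 2 * ν * (1 / r i) - (2 * r i) / 2)
      (r i) := by
    have hS1 : HasDerivAt (fun t => ∑ p, ∑ q ∈ Finset.univ.filter (fun q => p < q),
        Real.log ((Function.update r i t p) ^ 2 - (Function.update r i t q) ^ 2))
        (∑ p, ∑ q ∈ Finset.univ.filter (fun q => p < q), d p q) (r i) := by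
      apply HasDerivAt.fun_sum
      intro p _
      apply HasDerivAt.fun_sum
      intro q hq
      have hpq : p < q := (Finset.mem_filter.mp hq).2
      rcases eq_or_ne p i with hp | hp
      · subst hp
        have hqi : q ≠ p := ne_of_gt hpq
        have heq : (fun t => Real.log ((Function.update r p t p) ^ 2 - (Function.update r p t q) ^ 2))
            = fun t => Real.log (t ^ 2 - r q ^ 2) := by
          funext t; simp [Function.update_apply, hqi]
        rw [heq, hd]
        simp only [if_pos rfl]
        have hne : r p ^ 2 - r q ^ 2 ≠ 0 := ne_of_gt (sq_sub_pos hr hpq)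
        have hinner : HasDerivAt (fun t : ℝ => t ^ 2 - r q ^ 2) (2 * r p) (r p) := by
          simpa using (hasDerivAt_pow 2 (r p)).sub_const (r q ^ 2)
        exact hinner.log hne
      · rcases eq_or_ne q i with hq' | hq'
        · subst hq'
          have heq : (fun t => Real.log ((Function.update r q t p) ^ 2 - (Function.update r q t q) ^ 2))
              = fun t => Real.log (r p ^ 2 - t ^ 2) := by
            funext t; simp [Function.update_apply, hp]
          rw [heq, hd]
          simp only [if_neg hp, if_pos rfl]
          have hne : r p ^ 2 - r q ^ 2 ≠ 0 := ne_of_gt (sq_sub_pos hr hpq)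
          have hinner : HasDerivAt (fun t : ℝ => r p ^ 2 - t ^ 2) (-(2 * r q)) (r q) := by
            simpa using (hasDerivAt_pow 2 (r q)).const_sub (r p ^ 2)
          exact hinner.log hne
        · have heq : (fun t => Real.log ((Function.update r i t p) ^ 2 - (Function.update r i t q) ^ 2))
              = fun _ => Real.log (r p ^ 2 - r q ^ 2) := by
            funext t; simp [Function.update_apply, hp, hq']
          rw [heq, hd]
          simp only [if_neg hp, if_neg hq']
          exact hasDerivAt_const _ _
    have hS2 : HasDerivAt (fun t => ∑ p, Real.log (Function.update r i t p))
        (1 / r i) (r i) := by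
      have : HasDerivAt (fun t => ∑ p, Real.log (Function.update r i t p))
          (∑ p, if p = i then 1 / r i else 0) (r i) := by
        apply HasDerivAt.fun_sum
        intro p _
        rcases eq_or_ne p i with hp | hp
        · subst hp
          have heq : (fun t => Real.log (Function.update r p t p)) = Real.log := by
            funext t; simp
          rw [heq, if_pos rfl]
          simpa [one_div] using Real.hasDerivAt_log (ne_of_gt hri)
        · have heq : (fun t => Real.log (Function.update r i t p)) = fun _ => Real.log (r p) := by
            funext t; simp [Function.update_apply, hp]
          rw [heq, if_neg hp]
          exact hasDerivAt_const _ _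
      simpa using this
    have hS3 : HasDerivAt (fun t => ∑ p, (Function.update r i t p) ^ 2) (2 * r i) (r i) := by
      have : HasDerivAt (fun t => ∑ p, (Function.update r i t p) ^ 2)
          (∑ p, if p = i then 2 * r i else 0) (r i) := by
        apply HasDerivAt.fun_sum
        intro p _
        rcases eq_or_ne p i with hp | hp
        · subst hp
          have heq : (fun t => (Function.update r p t p) ^ 2) = fun t => t ^ 2 := by
            funext t; simp
          rw [heq, if_pos rfl]
          simpa using hasDerivAt_pow 2 (r p)
        · have heq : (fun t => (Function.update r i t p) ^ 2) = fun _ => (r p) ^ 2 := by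
            funext t; simp [Function.update_apply, hp]
          rw [heq, if_neg hp]
          exact hasDerivAt_const _ _
      simpa using this
    exact ((hS1.const_mul 2).add ((hS2.const_mul (2 * ν)))).sub (hS3.div_const 2)
  -- derivative is zero
  have hD : 2 * (∑ p, ∑ q ∈ Finset.univ.filter (fun q => p < q), d p q)
      + 2 * ν * (1 / r i) - (2 * r i) / 2 = 0 := by
    rw [← hderiv.deriv]
    exact hlm.deriv_eq_zero
  -- compute the double sum
  have hsum : ∑ p, ∑ q ∈ Finset.univ.filter (fun q => p < q), d p q
      = 2 * r i * ∑ j ∈ Finset.univ.erase i, 1 / (r i ^ 2 - r j ^ 2) := by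
    have hsplit : ∀ p : Fin N, p ≠ i →
        ∑ q ∈ Finset.univ.filter (fun q => p < q), d p q
          = if p < i then (-(2 * r i)) / (r p ^ 2 - r i ^ 2) else 0 := by
      intro p hp
      have : ∀ q ∈ Finset.univ.filter (fun q => p < q), d p q
          = if q = i then (-(2 * r i)) / (r p ^ 2 - r i ^ 2) else 0 := by
        intro q _
        rw [hd]; simp only [if_neg hp]
      rw [Finset.sum_congr rfl this, Finset.sum_ite_eq' _ i
        (fun _ => (-(2 * r i)) / (r p ^ 2 - r i ^ 2))]
      simp [Finset.mem_filter]
    rw [← Finset.add_sum_erase _ _ (Finset.mem_univ i)]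
    have h1 : ∑ q ∈ Finset.univ.filter (fun q => i < q), d i q
        = ∑ q ∈ Finset.univ.filter (fun q => i < q), (2 * r i) / (r i ^ 2 - r q ^ 2) := by
      refine Finset.sum_congr rfl fun q _ => ?_
      rw [hd]; simp
    have h2 : ∑ p ∈ Finset.univ.erase i, ∑ q ∈ Finset.univ.filter (fun q => p < q), d p q
        = ∑ p ∈ Finset.univ.filter (fun p => p < i), (-(2 * r i)) / (r p ^ 2 - r i ^ 2) := by
      rw [erase_split]
      have e1 : ∑ p ∈ Finset.univ.filter (fun p => p < i),
          ∑ q ∈ Finset.univ.filter (fun q => p < q), d p q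
          = ∑ p ∈ Finset.univ.filter (fun p => p < i), (-(2 * r i)) / (r p ^ 2 - r i ^ 2) := by
        refine Finset.sum_congr rfl fun p hp => ?_
        have hpi : p < i := (Finset.mem_filter.mp hp).2
        rw [hsplit p (ne_of_lt hpi), if_pos hpi]
      have e2 : ∑ p ∈ Finset.univ.filter (fun p => i < p),
          ∑ q ∈ Finset.univ.filter (fun q => p < q), d p q = 0 := by
        refine Finset.sum_eq_zero fun p hp => ?_
        have hpi : i < p := (Finset.mem_filter.mp hp).2
        rw [hsplit p (ne_of_gt hpi), if_neg (not_lt.mpr hpi.le)]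
      rw [e1, e2, add_zero]
    rw [h1, h2, erase_split N i (fun j => 1 / (r i ^ 2 - r j ^ 2))]
    rw [mul_add, Finset.mul_sum, Finset.mul_sum]
    rw [add_comm]
    congr 1
    · refine Finset.sum_congr rfl fun p hp => ?_
      have hpi : p < i := (Finset.mem_filter.mp hp).2
      have hne : r p ^ 2 - r i ^ 2 ≠ 0 := ne_of_gt (sq_sub_pos hr hpi)
      have hne' : r i ^ 2 - r p ^ 2 ≠ 0 := by intro h; apply hne; linarith
      field_simp
      ring
    · refine Finset.sum_congr rfl fun q hq => ?_
      have hqi : i < q := (Finset.mem_filter.mp hq).2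
      have hne : r i ^ 2 - r q ^ 2 ≠ 0 := ne_of_gt (sq_sub_pos hr hqi)
      rw [mul_one_div]
  rw [hsum] at hD
  have hri' : r i ≠ 0 := ne_of_gt hri
  set T := ∑ j ∈ Finset.univ.erase i, 1 / (r i ^ 2 - r j ^ 2)
  field_simp at hD ⊢
  nlinarith [hD]


theorem stmt_6 (N : ℕ) (ν : ℝ) (hν : 0 < ν) (r : Fin N → ℝ) (hr : InChamberB N r) :
    (∀ y : Fin N → ℝ, InChamberB N y → WB N ν y ≤ WB N ν r) ↔
      (∀ i, r i / 2 =
        (∑ j ∈ Finset.univ.erase i, (1 / (r i - r j) + 1 / (r i + r j))) + ν / r i) := by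
  constructor
  · intro hmax i
    rw [eq_reform N ν r hr i]
    exact forward N ν hν r hr hmax i
  · intro heq y hy
    exact backward N ν hν r hr (fun i => (eq_reform N ν r hr i).mp (heq i)) y hy
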